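/- For any prime p > 3, ∑_{k=1}^{p−1} (−1)^k k^2 D_k D_{k−1} ≡ −(5/6) p (mod p^2), i.e., 6 ∑_{k=1}^{p−1} (−1)^k k^2 D_k D_{k−1} ≡ −5p (mod p^2). -/

import Mathlib

def D (n : ℕ) : ℤ :=
  ∑ k ∈ Finset.range (n + 1), (n.choose k : ℤ) * ((n + k).choose k : ℤ)

def gaux (n k : ℕ) : ℤ :=
  if k = 0 then 0 else 2*(2*(n:ℤ)+3) * ((n+1).choose (k-1) : ℤ) * ((n+k).choose (k-1) : ℤ)

lemma Drec (n : ℕ) :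
    ((n:ℤ)+2) * D (n+2) = 3*(2*(n:ℤ)+3) * D (n+1) - ((n:ℤ)+1) * D n := by
  have key : ∀ k ∈ Finset.range (n+3),
      ((n:ℤ)+2) * (((n+2).choose k : ℤ) * ((n+2+k).choose k : ℤ))
      - 3*(2*(n:ℤ)+3) * (((n+1).choose k : ℤ) * ((n+1+k).choose k : ℤ))
      + ((n:ℤ)+1) * ((n.choose k : ℤ) * ((n+k).choose k : ℤ))
      = gaux n k - gaux n (k+1) := by
    intro k hk
    simp only [Finset.mem_range] at hk
    match k with
    | 0 => simp [gaux]; ring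
    | (j+1) =>
      simp only [gaux, if_neg (Nat.succ_ne_zero j), if_neg (Nat.succ_ne_zero (j+1)),
        Nat.add_sub_cancel, Nat.succ_sub_one]
      rw [show n+(j+1+1) = n+2+j from by omega, show n+2+(j+1) = n+3+j from by omega,
        show n+1+(j+1) = n+2+j from by omega, show n+(j+1) = n+1+j from by omega]
      by_cases hj : j + 1 ≤ n
      · -- main case
        have hjn : j < n := hj
        have hj2 : j ≤ n := le_of_lt hjn
        have e1 : (n.choose (j+1) : ℤ) * ((n:ℤ)+1) = ((n+1).choose (j+1) : ℤ) * ((n:ℤ) - (j:ℤ)) := by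
          have h := Nat.choose_mul_succ_eq n (j+1)
          rw [show n+1-(j+1) = n-j from by omega] at h
          zify [hj2] at h; exact h
        have e2 : ((n+1).choose (j+1) : ℤ) * ((n:ℤ)+2) = ((n+2).choose (j+1) : ℤ) * ((n:ℤ)+1 - (j:ℤ)) := by
          have h := Nat.choose_mul_succ_eq (n+1) (j+1)
          rw [show n+1+1-(j+1) = n+1-j from by omega] at h
          zify [show j ≤ n+1 from by omega] at h
          push_cast at h; linarith
        have e3 : ((n+1+j).choose (j+1) : ℤ) * ((n:ℤ)+(j:ℤ)+2) = ((n+2+j).choose (j+1) : ℤ) * ((n:ℤ)+1) := by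
          have h := Nat.choose_mul_succ_eq (n+1+j) (j+1)
          rw [show n+1+j+1-(j+1) = n+1 from by omega, show n+1+j+1 = n+2+j from by omega] at h
          zify at h; push_cast at h; linarith
        have e4 : ((n+2+j).choose (j+1) : ℤ) * ((n:ℤ)+(j:ℤ)+3) = ((n+3+j).choose (j+1) : ℤ) * ((n:ℤ)+2) := by
          have h := Nat.choose_mul_succ_eq (n+2+j) (j+1)
          rw [show n+2+j+1-(j+1) = n+2 from by omega, show n+2+j+1 = n+3+j from by omega] at h
          zify at h; push_cast at h; linarith
        have e5 : ((n+1).choose (j+1) : ℤ) * ((j:ℤ)+1) = ((n+1).choose j : ℤ) * ((n:ℤ)+1 - (j:ℤ)) := by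
          have h := Nat.choose_succ_right_eq (n+1) j
          zify [show j ≤ n+1 from by omega] at h
          push_cast at h; linarith
        have e6 : ((n+1+j).choose (j+1) : ℤ) * ((j:ℤ)+1) = ((n+1+j).choose j : ℤ) * ((n:ℤ)+1) := by
          have h := Nat.choose_succ_right_eq (n+1+j) j
          rw [show n+1+j-j = n+1 from by omega] at h
          zify at h; push_cast at h; linarith
        set x := (n.choose (j+1) : ℤ)
        set u := ((n+1).choose (j+1) : ℤ)
        set v := ((n+2).choose (j+1) : ℤ)
        set y := ((n+1+j).choose (j+1) : ℤ)
        set s := ((n+2+j).choose (j+1) : ℤ)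
        set t := ((n+3+j).choose (j+1) : ℤ)
        set P := ((n+1).choose j : ℤ)
        set q := ((n+1+j).choose j : ℤ)
        have hv : v*((n:ℤ)+1-(j:ℤ))*((n:ℤ)-(j:ℤ)) = x*((n:ℤ)+1)*((n:ℤ)+2) := by
          linear_combination (-((n:ℤ)-(j:ℤ)))*e2 - ((n:ℤ)+2)*e1
        have ht : t*((n:ℤ)+1)*((n:ℤ)+2) = y*((n:ℤ)+(j:ℤ)+2)*((n:ℤ)+(j:ℤ)+3) := by
          linear_combination (-((n:ℤ)+1))*e4 - ((n:ℤ)+(j:ℤ)+3)*e3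
        have hVT : v*t*(((n:ℤ)+1-(j:ℤ))*((n:ℤ)-(j:ℤ))*((n:ℤ)+1)*((n:ℤ)+2))
            = x*y*(((n:ℤ)+1)*((n:ℤ)+2)*((n:ℤ)+(j:ℤ)+2)*((n:ℤ)+(j:ℤ)+3)) := by
          linear_combination (t*((n:ℤ)+1)*((n:ℤ)+2))*hv + (x*((n:ℤ)+1)*((n:ℤ)+2))*ht
        have h13 : u*s*(((n:ℤ)-(j:ℤ))*((n:ℤ)+1)) = x*y*(((n:ℤ)+1)*((n:ℤ)+(j:ℤ)+2)) := by
          linear_combination (-((n:ℤ)+1)*s)*e1 - (((n:ℤ)+1)*x)*e3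
        have hPQ : P*q*(((n:ℤ)+1-(j:ℤ))*((n:ℤ)-(j:ℤ))) = ((j:ℤ)+1)^2 * (x*y) := by
          linear_combination (-((n:ℤ)-(j:ℤ))*q)*e5 - (((j:ℤ)+1)*q)*e1 - (((j:ℤ)+1)*x)*e6
        have hD : (((n:ℤ)+1-(j:ℤ))*((n:ℤ)-(j:ℤ))*((n:ℤ)+1)*((n:ℤ)+2)) ≠ 0 := by
          have h1 : (j:ℤ) < (n:ℤ) := by exact_mod_cast hjn
          have := mul_pos (mul_pos (mul_pos
            (by linarith : (0:ℤ) < (n:ℤ)+1-(j:ℤ)) (by linarith : (0:ℤ) < (n:ℤ)-(j:ℤ)))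
            (by linarith : (0:ℤ) < (n:ℤ)+1)) (by linarith : (0:ℤ) < (n:ℤ)+2)
          linarith
        have goalD : (((n:ℤ)+1-(j:ℤ))*((n:ℤ)-(j:ℤ))*((n:ℤ)+1)*((n:ℤ)+2)) *
            (((n:ℤ)+2) * (v*t) - 3*(2*(n:ℤ)+3) * (u*s) + ((n:ℤ)+1) * (x*y))
            = (((n:ℤ)+1-(j:ℤ))*((n:ℤ)-(j:ℤ))*((n:ℤ)+1)*((n:ℤ)+2)) *
            (2*(2*(n:ℤ)+3)*(P*q) - 2*(2*(n:ℤ)+3)*(u*s)) := by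
          linear_combination ((n:ℤ)+2)*hVT - (2*(n:ℤ)+3)*((n:ℤ)+1-(j:ℤ))*((n:ℤ)+2)*h13
            - (4*(n:ℤ)+6)*((n:ℤ)+2)*((n:ℤ)+1)*hPQ
        have hc := mul_left_cancel₀ hD goalD
        linear_combination hc
      · -- j = n or j = n+1
        have hj' : j = n ∨ j = n+1 := by omega
        rcases hj' with hj1 | hj1 <;> rw [hj1]
        · -- k = n+1
          have f4 : ((n+2+n).choose (n+1) : ℤ) * (2*(n:ℤ)+3) = ((n+3+n).choose (n+1) : ℤ) * ((n:ℤ)+2) := by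
            have h := Nat.choose_mul_succ_eq (n+2+n) (n+1)
            rw [show n+2+n+1-(n+1) = n+2 from by omega, show n+2+n+1 = n+3+n from by omega] at h
            zify at h; push_cast at h; linarith
          have fs : ((n+2+n).choose (n+1) : ℤ) = 2 * ((n+1+n).choose n : ℤ) := by
            have h1 : (n+2+n).choose (n+1) = (n+1+n).choose n + (n+1+n).choose (n+1) :=
              Nat.choose_succ_succ (n+1+n) n ▸ by rw [show n+2+n = n+1+n+1 from by omega]
            have h2 : (n+1+n).choose (n+1) = (n+1+n).choose n := by
              rw [show n+1+n = 2*n+1 from by omega]; exact Nat.choose_symm_half n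
            rw [h1, h2]; push_cast; ring
          have hx : (n.choose (n+1) : ℤ) = 0 := by
            simp [Nat.choose_eq_zero_of_lt]
          have hu : ((n+1).choose (n+1) : ℤ) = 1 := by simp
          have hP : ((n+1).choose n : ℤ) = (n:ℤ)+1 := by
            rw [Nat.choose_succ_self_right]; push_cast; ring
          have hv2 : ((n+2).choose (n+1) : ℤ) = (n:ℤ)+2 := by
            rw [Nat.choose_succ_self_right]; push_cast; ring
          rw [hx, hu, hP, hv2]
          linear_combination (-((n:ℤ)+2))*f4 + (2*(n:ℤ)+3)*((n:ℤ)+1)*fs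
        · -- k = n+2
          have hcb : ((n:ℤ)+2) * ((n+3+(n+1)).choose (n+2) : ℤ)
              = 2*(2*(n:ℤ)+3) * ((n+1+(n+1)).choose (n+1) : ℤ) := by
            have h := Nat.succ_mul_centralBinom_succ (n+1)
            unfold Nat.centralBinom at h
            rw [show 2*(n+1+1) = n+3+(n+1) from by omega, show 2*(n+1) = n+1+(n+1) from by omega,
              show n+1+1 = n+2 from by omega] at h
            zify at h; push_cast at h; linarith
          have hx : (n.choose (n+2) : ℤ) = 0 := by simp [Nat.choose_eq_zero_of_lt]
          have hu : ((n+1).choose (n+2) : ℤ) = 0 := by simp [Nat.choose_eq_zero_of_lt]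
          have hv : ((n+2).choose (n+2) : ℤ) = 1 := by simp
          have hP : ((n+1).choose (n+1) : ℤ) = 1 := by simp
          rw [hx, hu, hv, hP]
          linear_combination hcb
  have hsum := Finset.sum_congr rfl key
  rw [Finset.sum_range_sub' (gaux n) (n+3)] at hsum
  have hg0 : gaux n 0 = 0 := by simp [gaux]
  have hgN : gaux n (n+3) = 0 := by
    simp [gaux, Nat.choose_eq_zero_of_lt]
  rw [hg0, hgN] at hsum
  have hD2 : ∑ k ∈ Finset.range (n+3), ((n+2).choose k : ℤ) * ((n+2+k).choose k : ℤ) = D (n+2) := rfl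
  have hD1 : ∑ k ∈ Finset.range (n+3), ((n+1).choose k : ℤ) * ((n+1+k).choose k : ℤ) = D (n+1) := by
    rw [Finset.sum_range_succ]
    have : ((n+1).choose (n+2) : ℤ) = 0 := by simp [Nat.choose_eq_zero_of_lt]
    rw [this]; simp [D]
  have hD0 : ∑ k ∈ Finset.range (n+3), (n.choose k : ℤ) * ((n+k).choose k : ℤ) = D n := by
    rw [Finset.sum_range_succ, Finset.sum_range_succ]
    have h1 : (n.choose (n+2) : ℤ) = 0 := by simp [Nat.choose_eq_zero_of_lt]
    have h2 : (n.choose (n+1) : ℤ) = 0 := by simp [Nat.choose_eq_zero_of_lt]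
    rw [h1, h2]; simp [D]
  have expand : ∑ k ∈ Finset.range (n+3),
      (((n:ℤ)+2) * (((n+2).choose k : ℤ) * ((n+2+k).choose k : ℤ))
      - 3*(2*(n:ℤ)+3) * (((n+1).choose k : ℤ) * ((n+1+k).choose k : ℤ))
      + ((n:ℤ)+1) * ((n.choose k : ℤ) * ((n+k).choose k : ℤ)))
      = ((n:ℤ)+2) * D (n+2) - 3*(2*(n:ℤ)+3) * D (n+1) + ((n:ℤ)+1) * D n := by
    rw [← hD2, ← hD1, ← hD0]
    rw [Finset.sum_add_distrib, Finset.sum_sub_distrib, ← Finset.mul_sum, ← Finset.mul_sum,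
      ← Finset.mul_sum]
  rw [expand] at hsum
  linarith


lemma D_zero : D 0 = 1 := by simp [D]

lemma D_one : D 1 = 3 := by
  simp [D, Finset.sum_range_succ]

lemma main_id (n : ℕ) :
    36 * ∑ k ∈ Finset.Icc 1 (n+1), (-1 : ℤ) ^ k * k ^ 2 * D k * D (k - 1)
      = (-1:ℤ)^(n+1) * (3*((n:ℤ)+1)^2*(D (n+1)^2 - D n^2)
        + 2*((n:ℤ)+1)*(9*((n:ℤ)+1)+5) * D (n+1) * D n) := by
  induction n with
  | zero =>
    rw [show (0:ℕ)+1 = 1 from rfl, Finset.Icc_self, Finset.sum_singleton]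
    rw [D_zero, D_one]
    norm_num
  | succ m ih =>
    simp only [show m+1+1 = m+2 by omega]
    rw [Finset.sum_Icc_succ_top (by omega : 1 ≤ m+2)]
    have hrec := Drec m
    have hD1 : ((m+2 : ℕ) : ℤ) = (m:ℤ)+2 := by push_cast; ring
    rw [mul_add, ih]
    simp only [show m+1+1 = m+2 by omega]
    rw [show (m+2) - 1 = m+1 from by omega]
    push_cast
    linear_combination ((-1:ℤ))^m * (-3*((m:ℤ)+2)*D (m+2) - D (m+1) + (3*(m:ℤ)+3)*D m) * hrec



lemma D_pred_one {p : ℕ} (hp : p.Prime) : (p:ℤ) ∣ D (p-1) - 1 := by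
  have h2 := hp.two_le
  have hsplit : D (p-1)
      = (∑ i ∈ Finset.range (p-1), ((p-1).choose (i+1) : ℤ) * ((p-1+(i+1)).choose (i+1) : ℤ)) + 1 := by
    unfold D
    rw [Finset.sum_range_succ']
    simp
  rw [hsplit]
  simp only [add_sub_cancel_right]
  apply Finset.dvd_sum
  intro i hi
  simp only [Finset.mem_range] at hi
  have hd : p ∣ (p-1+(i+1)).choose (i+1) := by
    apply hp.dvd_choose (by omega) (by omega) (by omega)
  exact Dvd.dvd.mul_left (Int.natCast_dvd_natCast.mpr hd) _

lemma D_self_three {p : ℕ} (hp : p.Prime) : (p:ℤ) ∣ D p - 3 := by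
  have h2 := hp.two_le
  obtain ⟨q, rfl⟩ : ∃ q, p = q+1 := ⟨p-1, by omega⟩
  have hsplit : D (q+1)
      = (∑ i ∈ Finset.range q, ((q+1).choose (i+1) : ℤ) * ((q+1+(i+1)).choose (i+1) : ℤ))
        + ((q+1+(q+1)).choose (q+1) : ℤ) + 1 := by
    unfold D
    rw [Finset.sum_range_succ, Finset.sum_range_succ']
    simp only [Nat.choose_zero_right, Nat.add_zero, Nat.choose_self, Nat.cast_one, one_mul, mul_one]
    push_cast
    ring
  have hvan : ((q+1+(q+1)).choose (q+1) : ℤ)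
      = (∑ i ∈ Finset.range q, ((q+1).choose (i+1) : ℤ) * ((q+1).choose (q+1-(i+1)) : ℤ)) + 2 := by
    have h := Nat.add_choose_eq (q+1) (q+1) (q+1)
    rw [Finset.Nat.sum_antidiagonal_eq_sum_range_succ_mk] at h
    rw [Finset.sum_range_succ, Finset.sum_range_succ'] at h
    simp only [Nat.choose_zero_right, Nat.choose_self, Nat.sub_self, Nat.sub_zero,
      one_mul, mul_one] at h
    rw [h]; push_cast; ring
  rw [hsplit, hvan]
  have hmid : ∀ i ∈ Finset.range q, ((q+1 : ℕ) : ℤ) ∣ ((q+1).choose (i+1) : ℤ) := by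
    intro i hi
    simp only [Finset.mem_range] at hi
    exact_mod_cast Int.natCast_dvd_natCast.mpr
      (hp.dvd_choose_self (by omega) (by omega))
  have hd1 : (↑(q+1) : ℤ) ∣ ∑ i ∈ Finset.range q,
      ((q+1).choose (i+1) : ℤ) * ((q+1+(i+1)).choose (i+1) : ℤ) :=
    Finset.dvd_sum fun i hi => Dvd.dvd.mul_right (hmid i hi) _
  have hd2 : (↑(q+1) : ℤ) ∣ ∑ i ∈ Finset.range q,
      ((q+1).choose (i+1) : ℤ) * ((q+1).choose (q+1-(i+1)) : ℤ) :=
    Finset.dvd_sum fun i hi => Dvd.dvd.mul_right (hmid i hi) _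
  have : (∑ i ∈ Finset.range q, ((q+1).choose (i+1) : ℤ) * ((q+1+(i+1)).choose (i+1) : ℤ))
      + ((∑ i ∈ Finset.range q, ((q+1).choose (i+1) : ℤ) * ((q+1).choose (q+1-(i+1)) : ℤ)) + 2)
      + 1 - 3
      = (∑ i ∈ Finset.range q, ((q+1).choose (i+1) : ℤ) * ((q+1+(i+1)).choose (i+1) : ℤ))
      + (∑ i ∈ Finset.range q, ((q+1).choose (i+1) : ℤ) * ((q+1).choose (q+1-(i+1)) : ℤ)) := by
    ring
  rw [this]
  exact dvd_add hd1 hd2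

theorem stmt7 (p : ℕ) (hp : p.Prime) (hp3 : 3 < p) :
    6 * ∑ k ∈ Finset.Icc 1 (p - 1), (-1 : ℤ) ^ k * k ^ 2 * D k * D (k - 1)
      ≡ -5 * p [ZMOD (p ^ 2)] := by
  have hp4 : p ≠ 4 := fun h => by rw [h] at hp; norm_num at hp
  have hp5 : 5 ≤ p := by omega
  set S : ℤ := ∑ k ∈ Finset.Icc 1 (p - 1), (-1 : ℤ) ^ k * k ^ 2 * D k * D (k - 1) with hSdef
  -- identity
  have h1 := main_id (p-2)
  simp only [show p-2+1 = p-1 by omega] at h1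
  rw [show ((p-2:ℕ):ℤ) = (p:ℤ)-2 by omega] at h1
  have hev : Even (p-1) := Nat.Odd.sub_odd (hp.odd_of_ne_two (by omega)) odd_one
  rw [hev.neg_one_pow, one_mul] at h1
  -- recurrence at p
  have h2 := Drec (p-2)
  simp only [show p-2+2 = p by omega, show p-2+1 = p-1 by omega] at h2
  rw [show ((p-2:ℕ):ℤ) = (p:ℤ)-2 by omega] at h2
  -- mod p facts
  obtain ⟨A, hA⟩ := D_pred_one hp
  obtain ⟨C, hC⟩ := D_self_three hp
  -- move to ZMod (p^2)
  set R := ZMod (p^2)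
  have hchar : (p:R)^2 = 0 := by
    rw [← Nat.cast_pow]; exact ZMod.natCast_self _
  rw [← hSdef] at h1
  have hidR := congrArg (fun z : ℤ => (z : R)) h1
  push_cast [R] at hidR
  have hrecR := congrArg (fun z : ℤ => (z : R)) h2
  push_cast +zetaDelta at hrecR
  have hAR : ((D (p-1):ℤ):R) = 1 + (p:R) * ((A:ℤ):R) := by
    have := congrArg (fun z : ℤ => (z : R)) hA
    push_cast +zetaDelta at this
    linear_combination this
  have hCR : ((D p:ℤ):R) = 3 + (p:R) * ((C:ℤ):R) := by
    have := congrArg (fun z : ℤ => (z : R)) hC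
    push_cast +zetaDelta at this
    linear_combination this
  set a : R := ((D (p-1):ℤ):R)
  set b : R := ((D (p-2):ℤ):R)
  set c : R := ((D p:ℤ):R)
  set A' : R := ((A:ℤ):R)
  set C' : R := ((C:ℤ):R)
  have hb : b = 3*a := by
    linear_combination (-1 - (p:R))*hrecR + (p:R)*hCR - 3*(p:R)*hAR
      + (C' - 3*A' + c - 6*a + b)*hchar
  have h36 : (36:R) * (S:R) = -30*(p:R) := by
    linear_combination hidR + (-3*((p:R)-1)^2*(b+3*a) + 2*((p:R)-1)*(9*(p:R)-4)*a)*hb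
      + 30*a^2*hchar - 30*(p:R)*(a+1)*hAR - 30*A'*(a+1)*hchar
  have h6u : IsUnit (6 : R) := by
    have : ((6:ℕ):R) = (6:R) := by norm_num
    rw [← this, ZMod.isUnit_iff_coprime]
    apply Nat.Coprime.pow_right
    have hpc : p.Coprime 6 := (Nat.Prime.coprime_iff_not_dvd hp).mpr (by
      intro hdvd
      have h6 := Nat.le_of_dvd (by norm_num) hdvd
      have : p = 5 ∨ p = 6 := by omega
      rcases this with rfl | rfl
      · norm_num at hdvd
      · norm_num at hp)
    exact hpc.symm
  have h66 : (6:R) * (6*(S:R) + 5*(p:R)) = (6:R) * 0 := by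
    rw [mul_zero]; linear_combination h36
  have hz := h6u.mul_left_cancel h66
  rw [show ((p:ℤ))^2 = ((p^2:ℕ):ℤ) by push_cast; ring]
  refine (ZMod.intCast_eq_intCast_iff (6*S) (-5*(p:ℤ)) (p^2)).mp ?_
  push_cast
  linear_combination hz
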